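/- If G = cl_n(G) is an n-closed graph of order n (i.e., every pair of distinct nonadjacent vertices u, v satisfies d(u) + d(v) ≤ n - 1), G has no Hamiltonian cycle, minimum degree δ(G) = k ≥ 1, n ≥ k³/2 + k + 4, and the number of edges m satisfies 2m ≥ n² - 2kn + 2k² + k - n, then G contains exactly k vertices of degree k and the remaining n - k vertices induce a complete graph. -/

import Mathlib

open SimpleGraph Finset

/-- Spectral radius (largest adjacency eigenvalue) of a graph on `Fin n`. -/
noncomputable def specRad {n : ℕ} (G : SimpleGraph (Fin n)) : ℝ :=
  haveI := Classical.decRel G.Adj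
  ⨆ i, (Matrix.IsHermitian.eigenvalues
    (by
      rw [Matrix.IsHermitian, Matrix.conjTranspose_eq_transpose_of_trivial]
      exact G.isSymm_adjMatrix : (G.adjMatrix ℝ).IsHermitian)) i

/-- `M_k(n) = K_k ∨ (K_{n-2k} + K̄_k)`: vertices `0..k-1` are the independent set,
vertices `k..2k-1` their joint neighborhood, vertices `k..n-1` a clique. -/
def Mgraph (k n : ℕ) : SimpleGraph (Fin n) where
  Adj i j := i ≠ j ∧ ((k ≤ i.val ∧ k ≤ j.val) ∨
    (i.val < k ∧ k ≤ j.val ∧ j.val < 2 * k) ∨ (j.val < k ∧ k ≤ i.val ∧ i.val < 2 * k))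
  symm := by constructor; intro i j h; exact ⟨h.1.symm, by tauto⟩
  loopless := by constructor; intro i h; exact h.1 rfl

instance (k n : ℕ) : DecidableRel (Mgraph k n).Adj := fun _ _ => instDecidableAnd

/-- `L_k(n) = K_1 ∨ (K_{n-k-1} + K_k)`: a `K_{k+1}` on vertices `0..k` and a
`K_{n-k}` on vertices `k..n-1`, sharing the vertex `k`. -/
def Lgraph (k n : ℕ) : SimpleGraph (Fin n) where
  Adj i j := i ≠ j ∧ ((i.val ≤ k ∧ j.val ≤ k) ∨ (k ≤ i.val ∧ k ≤ j.val))
  symm := by constructor; intro i j h; exact ⟨h.1.symm, by tauto⟩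
  loopless := by constructor; intro i h; exact h.1 rfl

instance (k n : ℕ) : DecidableRel (Lgraph k n).Adj := fun _ _ => instDecidableAnd

/-- `N_k(n) = K_k ∨ (K_{n-2k-1} + K̄_{k+1})`: vertices `0..k` are the independent set,
vertices `k+1..2k` their joint neighborhood, vertices `k+1..n-1` a clique. -/
def Ngraph (k n : ℕ) : SimpleGraph (Fin n) where
  Adj i j := i ≠ j ∧ ((k + 1 ≤ i.val ∧ k + 1 ≤ j.val) ∨
    (i.val < k + 1 ∧ k + 1 ≤ j.val ∧ j.val < 2 * k + 1) ∨
    (j.val < k + 1 ∧ k + 1 ≤ i.val ∧ i.val < 2 * k + 1))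
  symm := by constructor; intro i j h; exact ⟨h.1.symm, by tauto⟩
  loopless := by constructor; intro i h; exact h.1 rfl

instance (k n : ℕ) : DecidableRel (Ngraph k n).Adj := fun _ _ => instDecidableAnd

/-- The disjoint union `K_a + K_{n-a}` on `Fin n`: vertices `0..a-1` form one clique,
vertices `a..n-1` the other. -/
def DUgraph (a n : ℕ) : SimpleGraph (Fin n) where
  Adj i j := i ≠ j ∧ ((i.val < a ∧ j.val < a) ∨ (a ≤ i.val ∧ a ≤ j.val))
  symm := by constructor; intro i j h; exact ⟨h.1.symm, by tauto⟩
  loopless := by constructor; intro i h; exact h.1 rfl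

instance (a n : ℕ) : DecidableRel (DUgraph a n).Adj := fun _ _ => instDecidableAnd

/-- `G` has a Hamiltonian path. -/
def HasHamiltonianPath {V : Type*} [DecidableEq V] (G : SimpleGraph V) : Prop :=
  ∃ (u v : V) (p : G.Walk u v), p.IsHamiltonian

/-- `G` is Hamiltonian-connected. -/
def HamiltonianConnected {V : Type*} [DecidableEq V] (G : SimpleGraph V) : Prop :=
  ∀ u v : V, u ≠ v → ∃ p : G.Walk u v, p.IsHamiltonian

private lemma cube_fact1 (k : ℤ) (hk : 1 ≤ k) : 2 ≤ k^3 - k^2 - 4*k + 6 := by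
  rcases le_or_gt k 2 with h | h
  · interval_cases k <;> norm_num
  · nlinarith

private lemma QH_odd (k H : ℤ) (hk : 1 ≤ k) (hH : k^3 + 2*k + 6 ≤ 4*H) :
    1 ≤ H^2 + 3*H - 4*k*H + 2*k^2 - 3*k := by
  rcases le_or_gt k 3 with h | h
  · interval_cases k
    · have : 3 ≤ H := by omega
      nlinarith
    · have : 5 ≤ H := by omega
      nlinarith
    · have : 10 ≤ H := by omega
      nlinarith
  · have hk4 : 4 ≤ k := h
    have h1 : 4*k - 3 ≤ H := by nlinarith [mul_nonneg (by linarith : (0:ℤ) ≤ k - 4) (sq_nonneg k), mul_nonneg (by linarith : (0:ℤ) ≤ k - 4) (by linarith : (0:ℤ) ≤ k)]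
    nlinarith [mul_nonneg (by linarith : (0:ℤ) ≤ H) (by linarith : (0:ℤ) ≤ H - (4*k-3))]

private lemma QH_even (k H : ℤ) (hk : 1 ≤ k) (hH : k^3 + 2*k + 4 ≤ 4*H) :
    1 ≤ H^2 + 5*H - 4*k*H + 2*k^2 - 5*k := by
  rcases le_or_gt k 3 with h | h
  · interval_cases k
    · have : 2 ≤ H := by omega
      nlinarith
    · have : 4 ≤ H := by omega
      nlinarith
    · have : 10 ≤ H := by omega
      nlinarith
  · have hk4 : 4 ≤ k := h
    have h1 : 4*k - 3 ≤ H := by nlinarith [mul_nonneg (by linarith : (0:ℤ) ≤ k - 4) (sq_nonneg k), mul_nonneg (by linarith : (0:ℤ) ≤ k - 4) (by linarith : (0:ℤ) ≤ k)]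
    nlinarith [mul_nonneg (by linarith : (0:ℤ) ≤ H) (by linarith : (0:ℤ) ≤ H - (4*k-3))]

private lemma lemA (k h n : ℤ) (hk : 1 ≤ k) (hh : k + 1 ≤ h) (h2h : 2*h + 1 ≤ n)
    (hn : k^3 + 2*k + 8 ≤ 2*n) :
    k*(2*n-2*k-1) + 1 ≤ h*(2*n-3*h-1) + 2*(h-k) := by
  have hQA : 1 ≤ 2*n - k^2 - 6*k - 2 := by nlinarith [cube_fact1 k hk]
  obtain ⟨H, hH | hH⟩ : ∃ H, n = 2*H+1 ∨ n = 2*H+2 := ⟨(n-1)/2, by omega⟩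
  · subst hH
    have hhH : h ≤ H := by omega
    have hQH : 1 ≤ H^2 + 3*H - 4*k*H + 2*k^2 - 3*k := QH_odd k H hk (by omega)
    rcases eq_or_lt_of_le (show k+1 ≤ H by omega) with hE | hE
    · have hhe : h = k + 1 := by omega
      subst hhe
      nlinarith [hQA]
    · have key : (H-k-1) * ((h*(2*(2*H+1)-3*h-1) + 2*(h-k)) - (k*(2*(2*H+1)-2*k-1) + 1))
          = (H-h) * ((2*(2*H+1) - k^2 - 6*k - 2) - 1)
            + (h-k-1) * ((H^2 + 3*H - 4*k*H + 2*k^2 - 3*k) - 1)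
            + 3*(h-k-1)*(H-h)*(H-k-1) := by ring
      have h4 : 0 ≤ (H-h) * ((2*(2*H+1) - k^2 - 6*k - 2) - 1) :=
        mul_nonneg (by omega) (by linarith [hQA])
      have h5 : 0 ≤ (h-k-1) * ((H^2 + 3*H - 4*k*H + 2*k^2 - 3*k) - 1) :=
        mul_nonneg (by omega) (by linarith)
      have h6 : 0 ≤ 3*(h-k-1)*(H-h)*(H-k-1) := by
        have := mul_nonneg (mul_nonneg (show (0:ℤ) ≤ 3*(h-k-1) by omega) (show (0:ℤ) ≤ H-h by omega)) (show (0:ℤ) ≤ H-k-1 by omega)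
        linarith
      have hX : 0 ≤ (H-k-1) * ((h*(2*(2*H+1)-3*h-1) + 2*(h-k)) - (k*(2*(2*H+1)-2*k-1) + 1)) := by
        rw [key]; linarith
      have hpos : (0:ℤ) < H - k - 1 := by omega
      nlinarith [hX, hpos]
  · subst hH
    have hhH : h ≤ H := by omega
    have hQH : 1 ≤ H^2 + 5*H - 4*k*H + 2*k^2 - 5*k := QH_even k H hk (by omega)
    rcases eq_or_lt_of_le (show k+1 ≤ H by omega) with hE | hE
    · have hhe : h = k + 1 := by omega
      subst hhe
      nlinarith [hQA]
    · have key : (H-k-1) * ((h*(2*(2*H+2)-3*h-1) + 2*(h-k)) - (k*(2*(2*H+2)-2*k-1) + 1))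
          = (H-h) * ((2*(2*H+2) - k^2 - 6*k - 2) - 1)
            + (h-k-1) * ((H^2 + 5*H - 4*k*H + 2*k^2 - 5*k) - 1)
            + 3*(h-k-1)*(H-h)*(H-k-1) := by ring
      have h4 : 0 ≤ (H-h) * ((2*(2*H+2) - k^2 - 6*k - 2) - 1) :=
        mul_nonneg (by omega) (by linarith [hQA])
      have h5 : 0 ≤ (h-k-1) * ((H^2 + 5*H - 4*k*H + 2*k^2 - 5*k) - 1) :=
        mul_nonneg (by omega) (by linarith)
      have h6 : 0 ≤ 3*(h-k-1)*(H-h)*(H-k-1) := by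
        have := mul_nonneg (mul_nonneg (show (0:ℤ) ≤ 3*(h-k-1) by omega) (show (0:ℤ) ≤ H-h by omega)) (show (0:ℤ) ≤ H-k-1 by omega)
        linarith
      have hX : 0 ≤ (H-k-1) * ((h*(2*(2*H+2)-3*h-1) + 2*(h-k)) - (k*(2*(2*H+2)-2*k-1) + 1)) := by
        rw [key]; linarith
      have hpos : (0:ℤ) < H - k - 1 := by omega
      nlinarith [hX, hpos]

private lemma lem1 (k h σ c Sd n m : ℤ) (hk : 1 ≤ k) (hh : k+1 ≤ h) (hσ : h ≤ σ)
    (hn1 : σ + h ≤ n) (h2h : 2*h + 1 ≤ n) (hcσ : c + σ = n)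
    (hn : k^3 + 2*k + 8 ≤ 2*n) (hm : n^2 + 2*k^2 + k ≤ 2*m + 2*k*n + n)
    (hma : 2*m + c ≤ 2*Sd + c*c) (hS : Sd + h ≤ σ*h + k) : False := by
  have hA := lemA k h n hk hh h2h hn
  have hD : h*(2*n-3*h-1) ≤ σ*(2*n-σ-1-2*h) := by
    nlinarith [mul_nonneg (by linarith : (0:ℤ) ≤ σ - h) (by linarith : (0:ℤ) ≤ 2*n - 1 - 3*h - σ)]
  have hc : c = n - σ := by linarith
  subst hc
  nlinarith [hA, hD, hma, hS, hm]

private lemma lem2 (k p c Sd n m : ℤ) (hk : 1 ≤ k) (hp : k+1 ≤ p) (hn1 : p + k + 1 ≤ n)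
    (hcσ : c + p = n) (hn : k^3 + 2*k + 8 ≤ 2*n) (hm : n^2+2*k^2+k ≤ 2*m+2*k*n+n)
    (hma : 2*m + c ≤ 2*Sd + c*c) (hS : Sd ≤ p*k) : False := by
  have h3 : 1 ≤ k^3 - 2*k^2 - 2*k + 8 := by
    rcases le_or_gt k 3 with h | h
    · interval_cases k <;> norm_num
    · nlinarith [mul_nonneg (by linarith : (0:ℤ) ≤ k - 4) (sq_nonneg k), mul_nonneg (by linarith : (0:ℤ) ≤ k - 4) (by linarith : (0:ℤ) ≤ k)]
  have h1 : 0 ≤ (p - k - 1)*(2*n - 1 - 3*k - p) := mul_nonneg (by linarith) (by linarith)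
  have hc : c = n - p := by linarith
  subst hc
  nlinarith [h1, h3, hma, hS, hm]



private lemma nonnbr_card {n : ℕ} (G : SimpleGraph (Fin n)) [DecidableRel G.Adj] (x : Fin n) :
    G.degree x + ((univ.erase x).filter (fun w => ¬ G.Adj x w)).card + 1 = n := by
  classical
  have h2 := Finset.card_filter_add_card_filter_not
    (s := (univ : Finset (Fin n)).erase x) (p := fun w => G.Adj x w)
  have h3 : (univ.erase x).filter (fun w => G.Adj x w) = G.neighborFinset x := by
    ext w
    simp only [Finset.mem_filter, Finset.mem_erase, Finset.mem_univ, true_and,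
      SimpleGraph.mem_neighborFinset, and_true]
    exact and_iff_right_of_imp fun h => h.ne'
  have h4 : (univ.erase x).card + 1 = n := by
    rw [Finset.card_erase_of_mem (Finset.mem_univ x)]
    have : (univ : Finset (Fin n)).card = n := by simp
    have hn : 1 ≤ n := Fin.pos x
    omega
  rw [h3] at h2
  rw [G.card_neighborFinset_eq_degree] at h2
  omega

private lemma master {n : ℕ} (G : SimpleGraph (Fin n)) [DecidableRel G.Adj]
    (S : Finset (Fin n)) (x₀ : Fin n) (hx₀ : x₀ ∉ S) :
    2 * G.edgeFinset.card + 2 * ((Sᶜ.erase x₀).filter (fun y => ¬ G.Adj x₀ y)).card + Sᶜ.card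
      ≤ 2 * ∑ x ∈ S, G.degree x + Sᶜ.card * Sᶜ.card := by
  classical
  have hx₀c : x₀ ∈ Sᶜ := Finset.mem_compl.mpr hx₀
  -- degree decomposition
  have hdeg : ∀ w : Fin n, G.degree w
      = (S.filter (fun y => G.Adj w y)).card + (Sᶜ.filter (fun y => G.Adj w y)).card := by
    intro w
    rw [← G.card_neighborFinset_eq_degree]
    have h1 : G.neighborFinset w = univ.filter (fun y => G.Adj w y) := by
      ext y; simp [SimpleGraph.mem_neighborFinset]
    rw [h1, ← Finset.union_compl S, Finset.filter_union,
      Finset.card_union_of_disjoint (Finset.disjoint_filter_filter disjoint_compl_right)]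
  -- sum over univ
  have hsum : ∑ x ∈ S, G.degree x + ∑ w ∈ Sᶜ, G.degree w = 2 * G.edgeFinset.card := by
    rw [Finset.sum_add_sum_compl]
    exact G.sum_degrees_eq_twice_card_edges
  -- split sum over Sᶜ
  have hsplit : ∑ w ∈ Sᶜ, G.degree w
      = ∑ w ∈ Sᶜ, (S.filter (fun y => G.Adj w y)).card
        + ∑ w ∈ Sᶜ, (Sᶜ.filter (fun y => G.Adj w y)).card := by
    rw [← Finset.sum_add_distrib]
    exact Finset.sum_congr rfl fun w _ => hdeg w
  -- cross bound
  have hcross : ∑ w ∈ Sᶜ, (S.filter (fun y => G.Adj w y)).card ≤ ∑ x ∈ S, G.degree x := by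
    have e1 : ∑ w ∈ Sᶜ, (S.filter (fun y => G.Adj w y)).card
        = ∑ x ∈ S, ∑ w ∈ Sᶜ, (if G.Adj w x then 1 else 0) := by
      rw [← Finset.sum_comm]
      exact Finset.sum_congr rfl fun w _ => Finset.card_filter _ _
    rw [e1]
    apply Finset.sum_le_sum
    intro x hx
    have e2 : ∑ w ∈ Sᶜ, (if G.Adj w x then 1 else 0) = (Sᶜ.filter (fun w => G.Adj w x)).card :=
      (Finset.card_filter _ _).symm
    rw [e2, ← G.card_neighborFinset_eq_degree]
    apply Finset.card_le_card
    intro w hw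
    simp only [Finset.mem_filter] at hw
    simp only [SimpleGraph.mem_neighborFinset]
    exact hw.2.symm
  -- inner identity
  have hinner : ∀ w ∈ Sᶜ, (Sᶜ.filter (fun y => G.Adj w y)).card
      + ((Sᶜ.erase w).filter (fun y => ¬ G.Adj w y)).card + 1 = Sᶜ.card := by
    intro w hw
    have h1 : Sᶜ.filter (fun y => G.Adj w y) = (Sᶜ.erase w).filter (fun y => G.Adj w y) := by
      ext y
      simp only [Finset.mem_filter, Finset.mem_erase]
      constructor
      · rintro ⟨hy, ha⟩; exact ⟨⟨ha.ne', hy⟩, ha⟩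
      · rintro ⟨⟨_, hy⟩, ha⟩; exact ⟨hy, ha⟩
    have h2 := Finset.card_filter_add_card_filter_not
      (s := Sᶜ.erase w) (p := fun y => G.Adj w y)
    have h3 : (Sᶜ.erase w).card + 1 = Sᶜ.card := Finset.card_erase_add_one hw
    rw [h1]
    omega
  have hinnersum : ∑ w ∈ Sᶜ, (Sᶜ.filter (fun y => G.Adj w y)).card
      + ∑ w ∈ Sᶜ, ((Sᶜ.erase w).filter (fun y => ¬ G.Adj w y)).card + Sᶜ.card
      = Sᶜ.card * Sᶜ.card := by
    have e1 : ∑ w ∈ Sᶜ, ((Sᶜ.filter (fun y => G.Adj w y)).card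
        + ((Sᶜ.erase w).filter (fun y => ¬ G.Adj w y)).card + 1) = ∑ _w ∈ Sᶜ, Sᶜ.card :=
      Finset.sum_congr rfl hinner
    rw [Finset.sum_const, smul_eq_mul] at e1
    rw [← e1]
    rw [Finset.sum_add_distrib, Finset.sum_add_distrib, Finset.sum_const, smul_eq_mul, mul_one]
  -- the g-bound
  have hgb : 2 * ((Sᶜ.erase x₀).filter (fun y => ¬ G.Adj x₀ y)).card
      ≤ ∑ w ∈ Sᶜ, ((Sᶜ.erase w).filter (fun y => ¬ G.Adj w y)).card := by
    set T := (Sᶜ.erase x₀).filter (fun y => ¬ G.Adj x₀ y) with hT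
    have hx₀T : x₀ ∉ T := by
      intro h
      exact (Finset.ne_of_mem_erase (Finset.mem_of_mem_filter _ h)) rfl
    have hTsub : insert x₀ T ⊆ Sᶜ := by
      intro y hy
      rcases Finset.mem_insert.mp hy with rfl | hy
      · exact hx₀c
      · exact Finset.mem_of_mem_erase (Finset.mem_of_mem_filter _ hy)
    have h1 : ∑ w ∈ insert x₀ T, ((Sᶜ.erase w).filter (fun y => ¬ G.Adj w y)).card
        ≤ ∑ w ∈ Sᶜ, ((Sᶜ.erase w).filter (fun y => ¬ G.Adj w y)).card :=
      Finset.sum_le_sum_of_subset hTsub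
    rw [Finset.sum_insert hx₀T] at h1
    have h2 : T.card ≤ ∑ w ∈ T, ((Sᶜ.erase w).filter (fun y => ¬ G.Adj w y)).card := by
      have : ∑ _w ∈ T, 1 ≤ ∑ w ∈ T, ((Sᶜ.erase w).filter (fun y => ¬ G.Adj w y)).card := by
        apply Finset.sum_le_sum
        intro w hw
        have hw' := Finset.mem_filter.mp hw
        have hwx : w ≠ x₀ := Finset.ne_of_mem_erase hw'.1
        have hwS : x₀ ∈ (Sᶜ.erase w).filter (fun y => ¬ G.Adj w y) := by
          apply Finset.mem_filter.mpr
          refine ⟨Finset.mem_erase.mpr ⟨hwx.symm, hx₀c⟩, ?_⟩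
          intro ha
          exact hw'.2 ha.symm
        exact Finset.card_pos.mpr ⟨x₀, hwS⟩
      simpa using this
    have hTT : T.card = ((Sᶜ.erase x₀).filter (fun y => ¬ G.Adj x₀ y)).card := rfl
    omega
  omega

private lemma lem3 (k n : ℤ) (hk : 1 ≤ k) (hn : k^3 + 2*k + 8 ≤ 2*n) :
    k^2 + 2*k + 2 ≤ n := by
  have h : 0 ≤ k^3 - 2*k^2 - 2*k + 4 := by
    rcases le_or_gt k 2 with h | h
    · interval_cases k <;> norm_num
    · nlinarith
  linarith

set_option maxHeartbeats 2000000 in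
/-- If `G` is `n`-closed, has no Hamiltonian cycle, minimum degree `k ≥ 1`,
`n ≥ k³/2 + k + 4`, and `2m ≥ n² - 2kn + 2k² + k - n`, then `G` has exactly `k`
vertices of degree `k` and the remaining `n - k` vertices induce a complete
graph. -/
theorem stmt_17 (k n : ℕ) (hk : 1 ≤ k) (hn : (n : ℝ) ≥ (k : ℝ) ^ 3 / 2 + k + 4)
    (G : SimpleGraph (Fin n)) [DecidableRel G.Adj]
    (hclosed : ∀ u v : Fin n, u ≠ v → ¬ G.Adj u v → G.degree u + G.degree v ≤ n - 1)
    (hham : ¬ G.IsHamiltonian) (hδ : G.minDegree = k)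
    (hm : 2 * (G.edgeFinset.card : ℝ) ≥
      (n : ℝ) ^ 2 - 2 * k * n + 2 * (k : ℝ) ^ 2 + k - n) :
    (Finset.univ.filter fun v : Fin n => G.degree v = k).card = k ∧
      ∀ u v : Fin n, u ≠ v → G.degree u ≠ k → G.degree v ≠ k → G.Adj u v := by
  classical
  -- numeric hypotheses in ℕ
  have h2n : k^3 + 2*k + 8 ≤ 2*n := by
    have h1 : ((k^3 + 2*k + 8 : ℕ) : ℝ) ≤ ((2*n : ℕ) : ℝ) := by push_cast; nlinarith [hn]
    exact_mod_cast h1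
  have hk3 : 0 < k^3 := pow_pos (by omega) 3
  have hn6 : 6 ≤ n := by
    have h11 : 11 ≤ 2*n := by linarith
    omega
  haveI : Nonempty (Fin n) := ⟨⟨0, by omega⟩⟩
  have hm' : n^2 + 2*k^2 + k ≤ 2*G.edgeFinset.card + 2*k*n + n := by
    have h1 : ((n^2 + 2*k^2 + k : ℕ) : ℝ) ≤ ((2*G.edgeFinset.card + 2*k*n + n : ℕ) : ℝ) := by
      push_cast; nlinarith [hm]
    exact_mod_cast h1
  have hmind : ∀ w, k ≤ G.degree w := fun w => hδ ▸ G.minDegree_le_degree w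
  obtain ⟨z, hz⟩ := G.exists_minimal_degree_vertex
  have hzk : G.degree z = k := by rw [← hz]; exact hδ
  -- G is not complete
  have hpair : ∃ a b : Fin n, a ≠ b ∧ ¬ G.Adj a b := by
    by_contra hcon
    push_neg at hcon
    have hdz : G.degree z + 1 = n := by
      have h1 : G.neighborFinset z = univ.erase z := by
        ext w
        simp only [SimpleGraph.mem_neighborFinset, Finset.mem_erase, Finset.mem_univ, and_true]
        constructor
        · exact fun h => h.ne'
        · intro h; exact hcon z w (Ne.symm h)
      have h2 := Finset.card_erase_of_mem (Finset.mem_univ z)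
      rw [← G.card_neighborFinset_eq_degree, h1, h2]
      simp only [Finset.card_univ, Fintype.card_fin]
      omega
    have hkn : k + 1 = n := by omega
    have : k^3 + 2*k + 8 ≤ 2*(k+1) := by rw [hkn]; exact h2n
    have hk1 : 1 ≤ k^3 := hk3
    omega
  -- choose a maximal nonadjacent pair
  obtain ⟨a, b, hab, hnab⟩ := hpair
  have hFne : ((univ ×ˢ univ : Finset (Fin n × Fin n)).filter
      (fun q => q.1 ≠ q.2 ∧ ¬ G.Adj q.1 q.2)).Nonempty :=
    ⟨(a, b), by simp [hab, hnab]⟩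
  obtain ⟨q, hqF, hqmax⟩ := Finset.exists_max_image _
    (fun q : Fin n × Fin n => G.degree q.1 + G.degree q.2) hFne
  obtain ⟨u, v, huv, hnuv, hdu_le, hmax⟩ : ∃ u v : Fin n, u ≠ v ∧ ¬ G.Adj u v ∧
      G.degree u ≤ G.degree v ∧ ∀ x y : Fin n, x ≠ y → ¬ G.Adj x y →
        G.degree x + G.degree y ≤ G.degree u + G.degree v := by
    have hq' : q.1 ≠ q.2 ∧ ¬ G.Adj q.1 q.2 := by
      have := Finset.mem_filter.mp hqF
      exact this.2
    have hmax' : ∀ x y : Fin n, x ≠ y → ¬ G.Adj x y →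
        G.degree x + G.degree y ≤ G.degree q.1 + G.degree q.2 := by
      intro x y h1 h2
      exact hqmax (x, y) (by simp [h1, h2])
    rcases le_total (G.degree q.1) (G.degree q.2) with h | h
    · exact ⟨q.1, q.2, hq'.1, hq'.2, h, hmax'⟩
    · refine ⟨q.2, q.1, hq'.1.symm, fun hA => hq'.2 hA.symm, h, ?_⟩
      intro x y h1 h2
      have := hmax' x y h1 h2
      omega
  -- the set of non-neighbours of v
  set P : Finset (Fin n) := (univ.erase v).filter (fun w => ¬ G.Adj v w) with hPdef
  have hPmem : ∀ w, w ∈ P ↔ (w ≠ v ∧ ¬ G.Adj v w) := by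
    intro w; simp [hPdef]
  have hvP : v ∉ P := fun h => ((hPmem v).mp h).1 rfl
  have hPdeg : ∀ w ∈ P, G.degree w ≤ G.degree u := by
    intro w hw
    obtain ⟨h1, h2⟩ := (hPmem w).mp hw
    have := hmax w v h1 (fun hA => h2 hA.symm)
    omega
  have hPcard : G.degree v + P.card + 1 = n := nonnbr_card G v
  have hcl : G.degree u + G.degree v + 1 ≤ n := by
    have := hclosed u v huv hnuv
    omega
  have hup : G.degree u ≤ P.card := by omega
  have hpn : P.card + G.degree u + 1 ≤ n := by omega
  have huP : u ∈ P := (hPmem u).mpr ⟨huv, fun hA => hnuv hA.symm⟩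
  have hPc : P.card + Pᶜ.card = n := by
    have := Finset.card_add_card_compl P
    simpa using this
  have hSigP : ∑ x ∈ P, G.degree x ≤ P.card * G.degree u := by
    have := Finset.sum_le_card_nsmul P (fun x => G.degree x) (G.degree u) hPdeg
    simpa using this
  -- Phase 1 : G.degree u = k
  have hhk : G.degree u = k := by
    by_contra hne
    have hh1 : k + 1 ≤ G.degree u := by
      have := hmind u; omega
    have hzv : z ≠ v := by
      intro he
      rw [he] at hzk
      omega
    by_cases hzP : z ∈ P
    · -- use S = P
      have hmas := master G P v hvP
      have hSig : ∑ x ∈ P, G.degree x + G.degree u ≤ P.card * G.degree u + k := by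
        have e2 : ∑ x ∈ P.erase z, G.degree x + G.degree z = ∑ x ∈ P, G.degree x :=
          Finset.sum_erase_add P _ hzP
        have e3 : (P.erase z).card + 1 = P.card := Finset.card_erase_add_one hzP
        have e1 : ∑ x ∈ P.erase z, G.degree x ≤ (P.erase z).card * G.degree u := by
          have := Finset.sum_le_card_nsmul (P.erase z) (fun x => G.degree x) (G.degree u)
            (fun w hw => hPdeg w (Finset.mem_of_mem_erase hw))
          simpa using this
        have e4 : P.card * G.degree u = (P.erase z).card * G.degree u + G.degree u := by
          rw [← e3]; ring
        omega
      exact lem1 (k : ℤ) (G.degree u : ℤ) (P.card : ℤ) (Pᶜ.card : ℤ)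
        ((∑ x ∈ P, G.degree x : ℕ) : ℤ) (n : ℤ) (G.edgeFinset.card : ℤ)
        (by exact_mod_cast hk) (by exact_mod_cast hh1) (by exact_mod_cast hup)
        (by exact_mod_cast (show P.card + G.degree u ≤ n by omega)) (by exact_mod_cast (show 2*G.degree u + 1 ≤ n by omega))
        (by exact_mod_cast (show Pᶜ.card + P.card = n by omega))
        (by exact_mod_cast h2n) (by exact_mod_cast hm')
        (by exact_mod_cast (show 2*G.edgeFinset.card + Pᶜ.card
          ≤ 2*(∑ x ∈ P, G.degree x) + Pᶜ.card * Pᶜ.card by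
            calc 2*G.edgeFinset.card + Pᶜ.card
                ≤ 2*G.edgeFinset.card
                  + 2 * ((Pᶜ.erase v).filter (fun y => ¬ G.Adj v y)).card + Pᶜ.card := by omega
              _ ≤ _ := hmas))
        (by exact_mod_cast hSig)
    · -- use S = insert z P
      have hvzP : v ∉ insert z P := by
        intro h
        rcases Finset.mem_insert.mp h with h | h
        · exact hzv h.symm
        · exact hvP h
      have hmas := master G (insert z P) v hvzP
      have hcards : (insert z P).card = P.card + 1 := Finset.card_insert_of_notMem hzP
      have hccomp : (insert z P)ᶜ.card + (insert z P).card = n := by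
        have := Finset.card_add_card_compl (insert z P)
        simp only [Fintype.card_fin] at this
        omega
      have hSigi : ∑ x ∈ insert z P, G.degree x = k + ∑ x ∈ P, G.degree x := by
        rw [Finset.sum_insert hzP, hzk]
      exact lem1 (k : ℤ) (G.degree u : ℤ) ((P.card + 1 : ℕ) : ℤ) ((insert z P)ᶜ.card : ℤ)
        ((∑ x ∈ insert z P, G.degree x : ℕ) : ℤ) (n : ℤ) (G.edgeFinset.card : ℤ)
        (by exact_mod_cast hk) (by exact_mod_cast hh1)
        (by exact_mod_cast (show G.degree u ≤ P.card + 1 by omega))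
        (by exact_mod_cast (show P.card + 1 + G.degree u ≤ n by omega))
        (by exact_mod_cast (show 2*G.degree u + 1 ≤ n by omega))
        (by exact_mod_cast (show (insert z P)ᶜ.card + (P.card + 1) = n by omega))
        (by exact_mod_cast h2n) (by exact_mod_cast hm')
        (by exact_mod_cast (show 2*G.edgeFinset.card + (insert z P)ᶜ.card
          ≤ 2*(∑ x ∈ insert z P, G.degree x) + (insert z P)ᶜ.card * (insert z P)ᶜ.card by
            calc 2*G.edgeFinset.card + (insert z P)ᶜ.card
                ≤ 2*G.edgeFinset.card
                  + 2 * (((insert z P)ᶜ.erase v).filter (fun y => ¬ G.Adj v y)).card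
                  + (insert z P)ᶜ.card := by omega
              _ ≤ _ := hmas))
        (by exact_mod_cast (show (∑ x ∈ insert z P, G.degree x) + G.degree u
            ≤ (P.card + 1) * G.degree u + k by
          rw [hSigi]
          have : (P.card + 1) * G.degree u = P.card * G.degree u + G.degree u := by ring
          omega))
  -- Phase 2 : P.card = k
  have hpk : P.card = k := by
    by_contra hne
    have hp1 : k + 1 ≤ P.card := by omega
    have hmas := master G P v hvP
    exact lem2 (k : ℤ) (P.card : ℤ) (Pᶜ.card : ℤ) ((∑ x ∈ P, G.degree x : ℕ) : ℤ)
      (n : ℤ) (G.edgeFinset.card : ℤ)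
      (by exact_mod_cast hk) (by exact_mod_cast hp1)
      (by exact_mod_cast (show P.card + k + 1 ≤ n by omega))
      (by exact_mod_cast (show Pᶜ.card + P.card = n by omega))
      (by exact_mod_cast h2n) (by exact_mod_cast hm')
      (by exact_mod_cast (show 2*G.edgeFinset.card + Pᶜ.card
        ≤ 2*(∑ x ∈ P, G.degree x) + Pᶜ.card * Pᶜ.card by
          calc 2*G.edgeFinset.card + Pᶜ.card
              ≤ 2*G.edgeFinset.card
                + 2 * ((Pᶜ.erase v).filter (fun y => ¬ G.Adj v y)).card + Pᶜ.card := by omega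
            _ ≤ _ := hmas))
      (by exact_mod_cast (show ∑ x ∈ P, G.degree x ≤ P.card * k by rw [← hhk]; exact hSigP))
  -- Phase 3 : all vertices of P have degree k
  have hPdegk : ∀ w ∈ P, G.degree w = k := by
    intro w hw
    have h1 := hPdeg w hw
    have h2 := hmind w
    omega
  have hSigk : ∑ x ∈ P, G.degree x = k * k := by
    rw [Finset.sum_congr rfl hPdegk, Finset.sum_const, hpk, smul_eq_mul]
  have hnk : k^2 + 2*k + 2 ≤ n := by
    have := lem3 (k : ℤ) (n : ℤ) (by exact_mod_cast hk) (by exact_mod_cast h2n)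
    exact_mod_cast this
  -- the key contradiction machine
  have hkey : ∀ x : Fin n, x ∉ P → 2 * G.degree x + 1 ≤ n → False := by
    intro x hxP hxd
    have hmas := master G P x hxP
    rw [hSigk] at hmas
    generalize hs : ((Pᶜ.erase x).filter (fun y => ¬ G.Adj x y)).card = s at hmas
    generalize hc : Pᶜ.card = c at hmas
    generalize hE : G.edgeFinset.card = E at hmas
    have hc1 : c + k = n := by omega
    have h2s : 2 * s ≤ k * k := by
      have hm2 : n^2 + 2*k^2 + k ≤ 2*E + 2*k*n + n := by rw [← hE]; exact hm'
      have hmz : ((n:ℤ)^2 + 2*(k:ℤ)^2 + (k:ℤ) ≤ 2*(E:ℤ) + 2*(k:ℤ)*(n:ℤ) + (n:ℤ)) := by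
        exact_mod_cast hm2
      have hmasz : 2*(E:ℤ) + 2*(s:ℤ) + (c:ℤ) ≤ 2*((k:ℤ)*(k:ℤ)) + (c:ℤ)*(c:ℤ) := by
        exact_mod_cast hmas
      have hcsub : (c:ℤ) = (n:ℤ) - (k:ℤ) := by
        have h2 := congrArg (Nat.cast : ℕ → ℤ) hc1
        push_cast at h2
        linarith
      rw [hcsub] at hmasz
      have : 2*(s:ℤ) ≤ (k:ℤ)*(k:ℤ) := by nlinarith [hmasz, hmz]
      exact_mod_cast this
    have hW := nonnbr_card G x
    have hWs : ((univ.erase x).filter (fun w => ¬ G.Adj x w)).card ≤ s + P.card := by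
      have hsub : (univ.erase x).filter (fun w => ¬ G.Adj x w)
          ⊆ ((Pᶜ.erase x).filter (fun y => ¬ G.Adj x y)) ∪ P := by
        intro w hw
        have hw' := Finset.mem_filter.mp hw
        have hwx : w ≠ x := Finset.ne_of_mem_erase hw'.1
        by_cases hwP : w ∈ P
        · exact Finset.mem_union_right _ hwP
        · exact Finset.mem_union_left _ (Finset.mem_filter.mpr
            ⟨Finset.mem_erase.mpr ⟨hwx, Finset.mem_compl.mpr hwP⟩, hw'.2⟩)
      calc ((univ.erase x).filter (fun w => ¬ G.Adj x w)).card
          ≤ (((Pᶜ.erase x).filter (fun y => ¬ G.Adj x y)) ∪ P).card := Finset.card_le_card hsub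
        _ ≤ _ := by rw [← hs]; exact Finset.card_union_le _ _
    have hkk : k * k = k^2 := by ring
    linarith [hW, hWs, hxd, h2s, hnk, hpk, hkk]
  -- Conclusions
  constructor
  · have hset : (univ.filter fun w : Fin n => G.degree w = k) = P := by
      apply Finset.ext
      intro w
      simp only [Finset.mem_filter, Finset.mem_univ, true_and]
      constructor
      · intro hdw
        by_contra hwP
        exact hkey w hwP (by
          have hsq : 0 ≤ k^2 := Nat.zero_le _
          omega)
      · intro hwP
        exact hPdegk w hwP
    rw [hset]
    exact hpk
  · intro x y hxy hdx hdy
    by_contra hadj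
    have hcxy := hclosed x y hxy hadj
    have hxP : x ∉ P := fun h => hdx (hPdegk x h)
    have hyP : y ∉ P := fun h => hdy (hPdegk y h)
    rcases le_total (G.degree x) (G.degree y) with hle | hle
    · exact hkey x hxP (by omega)
    · exact hkey y hyP (by omega)
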